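/- Let Q : ℝ^p → ℝ be convex and differentiable, let θ* ∈ ℝ^p with support S = {j : θ*_j ≠ 0} of cardinality |S| = s ≥ 1, and let λ > 0 satisfy λ ≥ 2‖∇Q(θ*)‖_∞. Let θ̂ be a global minimizer of θ ↦ Q(θ) + λ‖θ‖₁ over ℝ^p, and set δ = θ̂ − θ*. Then δ lies in the cone ‖δ_{Sᶜ}‖₁ ≤ 3‖δ_S‖₁, and consequently ‖δ‖₁ ≤ 4√s · ‖δ‖₂. -/
import Mathlib


/-- let `Q : ℝ^p → ℝ` be convex and differentiable, `θ*` have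
support `S = {j : θ*_j ≠ 0}` of cardinality `s ≥ 1`, and
`λ ≥ 2‖∇Q(θ*)‖_∞` (coordinatewise: `2|∂_j Q(θ*)| ≤ λ` for all `j`). If `θ̂`
globally minimizes `θ ↦ Q(θ) + λ‖θ‖₁`, then `δ = θ̂ − θ*` satisfies the cone
condition `‖δ_{Sᶜ}‖₁ ≤ 3‖δ_S‖₁`, and consequently `‖δ‖₁ ≤ 4√s ‖δ‖₂`. -/
theorem stmt15 (p : ℕ) (Q : (Fin p → ℝ) → ℝ)
    (hconv : ConvexOn ℝ Set.univ Q) (hdiff : Differentiable ℝ Q)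
    (θstar : Fin p → ℝ)
    (S : Finset (Fin p)) (hS : ∀ j, j ∈ S ↔ θstar j ≠ 0)
    (s : ℕ) (hcard : S.card = s) (hs : 1 ≤ s)
    (lam : ℝ) (hlampos : 0 < lam)
    (hlam : ∀ j, 2 * |fderiv ℝ Q θstar (Pi.single j 1)| ≤ lam)
    (θhat : Fin p → ℝ)
    (hmin : ∀ θ : Fin p → ℝ,
      Q θhat + lam * ∑ j, |θhat j| ≤ Q θ + lam * ∑ j, |θ j|) :
    (∑ j ∈ Sᶜ, |θhat j - θstar j|) ≤ 3 * ∑ j ∈ S, |θhat j - θstar j| ∧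
      (∑ j, |θhat j - θstar j|) ≤
        4 * Real.sqrt s * Real.sqrt (∑ j, (θhat j - θstar j) ^ 2) := by
  set δ : Fin p → ℝ := fun j => θhat j - θstar j with hδ
  set L := fderiv ℝ Q θstar with hL
  set A := ∑ j ∈ S, |δ j| with hA
  set B := ∑ j ∈ Sᶜ, |δ j| with hB
  have hApos : 0 ≤ A := Finset.sum_nonneg fun j _ => abs_nonneg _
  have hBpos : 0 ≤ B := Finset.sum_nonneg fun j _ => abs_nonneg _
  -- gradient inequality along the segment
  have hgrad : L δ ≤ Q θhat - Q θstar := by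
    set g : ℝ → ℝ := fun t => Q (θstar + t • δ) with hg
    have hgconv : ConvexOn ℝ Set.univ g := by
      have := hconv.comp_affineMap (AffineMap.lineMap θstar θhat : ℝ →ᵃ[ℝ] (Fin p → ℝ))
      have heq : g = Q ∘ (AffineMap.lineMap θstar θhat : ℝ →ᵃ[ℝ] (Fin p → ℝ)) := by
        funext t
        simp only [g, Function.comp_apply, AffineMap.lineMap_apply]
        congr 1
        funext j
        simp [hδ]
        ring
      rw [heq]
      simpa using this
    have hgd : HasDerivAt g (L δ) 0 := by
      have hc : HasDerivAt (fun t : ℝ => θstar + t • δ) δ 0 := by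
        simpa using ((hasDerivAt_id (0:ℝ)).smul_const δ).const_add θstar
      have h0 : θstar + (0:ℝ) • δ = θstar := by simp
      have hQ : HasFDerivAt Q L (θstar + (0:ℝ) • δ) := by
        rw [h0]; exact (hdiff θstar).hasFDerivAt
      exact hQ.comp_hasDerivAt 0 hc
    have h01 : (0:ℝ) < 1 := one_pos
    have := hgconv.le_slope_of_hasDerivAt (Set.mem_univ 0) (Set.mem_univ 1) h01 hgd
    rw [slope_def_field] at this
    have hg0 : g 0 = Q θstar := by simp [g]
    have hg1 : g 1 = Q θhat := by
      simp only [g, one_smul, hδ]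
      congr 1
      funext j
      simp
    simp [hg0, hg1] at this
    linarith [this]
  -- bound |L δ|
  have hLδ : -(lam / 2) * (A + B) ≤ L δ := by
    have hrepr : L δ = ∑ j, δ j * L (Pi.single j 1) := by
      have hrep : δ = ∑ j, δ j • (Pi.single j 1 : Fin p → ℝ) := by
        funext k
        rw [Finset.sum_apply]
        simp [Pi.single_apply]
      conv_lhs => rw [hrep]
      rw [map_sum]
      simp [smul_eq_mul]
    have habs : |L δ| ≤ (lam / 2) * ∑ j, |δ j| := by
      rw [hrepr]
      calc |∑ j, δ j * L (Pi.single j 1)| ≤ ∑ j, |δ j * L (Pi.single j 1)| :=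
            Finset.abs_sum_le_sum_abs _ _
        _ ≤ ∑ j, |δ j| * (lam / 2) := by
            apply Finset.sum_le_sum
            intro j _
            rw [abs_mul]
            exact mul_le_mul_of_nonneg_left (by linarith [hlam j]) (abs_nonneg _)
        _ = (lam / 2) * ∑ j, |δ j| := by rw [Finset.mul_sum]; simp [mul_comm]
    have hsplit : (∑ j, |δ j|) = A + B := by
      rw [hA, hB, ← Finset.sum_add_sum_compl S]
    rw [hsplit] at habs
    nlinarith [abs_nonneg (L δ), le_abs_self (L δ), neg_abs_le (L δ)]
  -- minimality
  have hminS : Q θhat - Q θstar ≤ lam * (A - B) := by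
    have h := hmin θstar
    have hnorm : (∑ j, |θstar j|) - ∑ j, |θhat j| ≤ A - B := by
      have h1 : (∑ j, |θstar j|) = ∑ j ∈ S, |θstar j| := by
        rw [← Finset.sum_add_sum_compl S]
        have : ∑ j ∈ Sᶜ, |θstar j| = 0 := by
          apply Finset.sum_eq_zero
          intro j hj
          rw [Finset.mem_compl, hS] at hj
          simp [not_not.mp hj]
        linarith
      have h2 : (∑ j, |θhat j|) = (∑ j ∈ S, |θhat j|) + ∑ j ∈ Sᶜ, |θhat j| :=
        (Finset.sum_add_sum_compl S _).symm
      have h3 : ∑ j ∈ Sᶜ, |θhat j| = B := by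
        apply Finset.sum_congr rfl
        intro j hj
        rw [Finset.mem_compl, hS] at hj
        simp [hδ, not_not.mp hj]
      have h4 : (∑ j ∈ S, |θstar j|) - ∑ j ∈ S, |θhat j| ≤ A := by
        rw [hA, ← Finset.sum_sub_distrib]
        apply Finset.sum_le_sum
        intro j _
        have := abs_sub_abs_le_abs_sub (θstar j) (θhat j)
        have h5 : |θstar j - θhat j| = |δ j| := by rw [hδ]; rw [abs_sub_comm]
        linarith
      linarith
    nlinarith
  -- cone condition
  have hcone : B ≤ 3 * A := by nlinarith
  refine ⟨hcone, ?_⟩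
  -- Cauchy-Schwarz part
  have hCS : A ≤ Real.sqrt s * Real.sqrt (∑ j, δ j ^ 2) := by
    have h1 : A ^ 2 ≤ S.card * ∑ j ∈ S, |δ j| ^ 2 := sq_sum_le_card_mul_sum_sq
    have h2 : (∑ j ∈ S, |δ j| ^ 2) ≤ ∑ j, δ j ^ 2 := by
      calc (∑ j ∈ S, |δ j| ^ 2) = ∑ j ∈ S, δ j ^ 2 := by
            apply Finset.sum_congr rfl; intro j _; rw [sq_abs]
        _ ≤ ∑ j, δ j ^ 2 := Finset.sum_le_sum_of_subset_of_nonneg (Finset.subset_univ S)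
            (fun j _ _ => sq_nonneg _)
    have h3 : A ^ 2 ≤ s * ∑ j, δ j ^ 2 := by
      calc A ^ 2 ≤ S.card * ∑ j ∈ S, |δ j| ^ 2 := h1
        _ ≤ s * ∑ j, δ j ^ 2 := by
            rw [hcard]
            exact mul_le_mul_of_nonneg_left h2 (Nat.cast_nonneg s)
    have := Real.sqrt_le_sqrt h3
    rwa [Real.sqrt_sq hApos, Real.sqrt_mul (Nat.cast_nonneg s)] at this
  have hsum : (∑ j, |δ j|) = A + B := by rw [hA, hB, ← Finset.sum_add_sum_compl S]
  calc (∑ j, |δ j|) = A + B := hsum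
    _ ≤ 4 * A := by linarith
    _ ≤ 4 * (Real.sqrt s * Real.sqrt (∑ j, δ j ^ 2)) := by linarith
    _ = 4 * Real.sqrt s * Real.sqrt (∑ j, δ j ^ 2) := by ring
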